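/- In the monoid M = Mon⟨a,b | ab=ba, aa=bb⟩, every element can be written uniquely in the form a^n or a^n·b for some n ≥ 0. -/

import Mathlib

/-- The relations of the monoid `Mon⟨a,b | ab = ba, aa = bb⟩` on the free monoid
over two generators `a = 0`, `b = 1`. -/
def abRels : FreeMonoid (Fin 2) → FreeMonoid (Fin 2) → Prop := fun x y =>
  (x = FreeMonoid.of 0 * FreeMonoid.of 1 ∧ y = FreeMonoid.of 1 * FreeMonoid.of 0) ∨
  (x = FreeMonoid.of 0 * FreeMonoid.of 0 ∧ y = FreeMonoid.of 1 * FreeMonoid.of 1)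

/-- Length homomorphism. -/
noncomputable def lenHom : PresentedMonoid abRels →* Multiplicative ℕ :=
  PresentedMonoid.lift (fun _ : Fin 2 => Multiplicative.ofAdd (1 : ℕ)) (by
    rintro a b (⟨rfl, rfl⟩ | ⟨rfl, rfl⟩) <;> simp)

/-- Parity-of-`b` homomorphism. -/
noncomputable def parHom : PresentedMonoid abRels →* Multiplicative (ZMod 2) :=
  PresentedMonoid.lift (fun i : Fin 2 => Multiplicative.ofAdd (if i = 0 then (0 : ZMod 2) else 1))
    (by rintro a b (⟨rfl, rfl⟩ | ⟨rfl, rfl⟩) <;> simp <;> decide)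

lemma lenHom_normal (p : ℕ × Bool) :
    lenHom ((PresentedMonoid.of abRels 0) ^ p.1 *
      (if p.2 then PresentedMonoid.of abRels 1 else 1)) =
      Multiplicative.ofAdd (p.1 + if p.2 then 1 else 0) := by
  rcases p with ⟨n, e⟩
  have ha : lenHom (PresentedMonoid.of abRels 0) = Multiplicative.ofAdd (1 : ℕ) := rfl
  have hb : lenHom (PresentedMonoid.of abRels 1) = Multiplicative.ofAdd (1 : ℕ) := rfl
  cases e <;> simp [map_mul, map_pow, ha, hb, ← ofAdd_add, ← ofAdd_nsmul]

lemma parHom_normal (p : ℕ × Bool) :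
    parHom ((PresentedMonoid.of abRels 0) ^ p.1 *
      (if p.2 then PresentedMonoid.of abRels 1 else 1)) =
      Multiplicative.ofAdd (if p.2 then (1 : ZMod 2) else 0) := by
  rcases p with ⟨n, e⟩
  have ha : parHom (PresentedMonoid.of abRels 0) = Multiplicative.ofAdd (0 : ZMod 2) := rfl
  have hb : parHom (PresentedMonoid.of abRels 1) = Multiplicative.ofAdd (1 : ZMod 2) := rfl
  cases e <;> simp [map_mul, map_pow, ha, hb, ← ofAdd_add, ← ofAdd_nsmul]

lemma rel_ab : (PresentedMonoid.of abRels 0) * (PresentedMonoid.of abRels 1)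
    = (PresentedMonoid.of abRels 1) * (PresentedMonoid.of abRels 0) :=
  Quotient.sound (ConGen.Rel.of _ _ (Or.inl ⟨rfl, rfl⟩))

lemma rel_aa : (PresentedMonoid.of abRels 0) * (PresentedMonoid.of abRels 0)
    = (PresentedMonoid.of abRels 1) * (PresentedMonoid.of abRels 1) :=
  Quotient.sound (ConGen.Rel.of _ _ (Or.inr ⟨rfl, rfl⟩))

lemma b_comm_apow (n : ℕ) : (PresentedMonoid.of abRels 1) * (PresentedMonoid.of abRels 0) ^ n
    = (PresentedMonoid.of abRels 0) ^ n * (PresentedMonoid.of abRels 1) := by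
  induction n with
  | zero => simp
  | succ k ih =>
    rw [pow_succ, ← mul_assoc, ih, mul_assoc, ← rel_ab, ← mul_assoc, ← pow_succ]

lemma exists_normal (x : PresentedMonoid abRels) :
    ∃ p : ℕ × Bool, x = (PresentedMonoid.of abRels 0) ^ p.1 *
      (if p.2 then PresentedMonoid.of abRels 1 else 1) := by
  induction x with
  | h w =>
    induction w using FreeMonoid.inductionOn' with
    | one => exact ⟨(0, false), by simp⟩
    | of_mul i w ih =>
      obtain ⟨⟨n, e⟩, hp⟩ := ih
      rw [map_mul, hp]
      have hmk : PresentedMonoid.mk abRels (FreeMonoid.of i) = PresentedMonoid.of abRels i := rfl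
      rw [hmk]
      rcases i with ⟨_ | _ | k, hk⟩
      · have h0 : (⟨0, hk⟩ : Fin 2) = 0 := rfl
        refine ⟨(n + 1, e), ?_⟩
        rw [h0, ← mul_assoc, ← pow_succ']
      · have h1 : (⟨1, hk⟩ : Fin 2) = 1 := rfl
        rw [h1]
        cases e
        · refine ⟨(n, true), ?_⟩
          simp only [Bool.false_eq_true, if_false, if_true, mul_one]
          rw [b_comm_apow]
        · refine ⟨(n + 2, false), ?_⟩
          simp only [Bool.false_eq_true, if_false, if_true, mul_one]
          rw [← mul_assoc, b_comm_apow, mul_assoc, ← rel_aa,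
            pow_add, pow_two]
      · omega

/-- In `M = Mon⟨a,b | ab = ba, aa = bb⟩`, every element can be written uniquely
as `a ^ n` or `a ^ n * b` for some `n ≥ 0` (encoded by a pair `(n, flag)` where the
flag records the presence of the trailing `b`). -/
theorem abMonoid_normal_form (x : PresentedMonoid abRels) :
    ∃! p : ℕ × Bool,
      x = (PresentedMonoid.of abRels 0) ^ p.1 *
        (if p.2 then PresentedMonoid.of abRels 1 else 1) := by
  obtain ⟨p, hp⟩ := exists_normal x
  refine ⟨p, hp, fun q hq => ?_⟩
  have hx : ((PresentedMonoid.of abRels 0) ^ q.1 *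
      (if q.2 then PresentedMonoid.of abRels 1 else 1)) =
      ((PresentedMonoid.of abRels 0) ^ p.1 *
      (if p.2 then PresentedMonoid.of abRels 1 else 1)) := hq.symm.trans hp
  have hpar := congrArg parHom hx
  rw [parHom_normal, parHom_normal] at hpar
  have hflag : q.2 = p.2 := by
    rcases p with ⟨n, e⟩; rcases q with ⟨m, f⟩
    cases e <;> cases f <;> simp_all <;> revert hpar <;> decide
  have hlen := congrArg lenHom hx
  rw [lenHom_normal, lenHom_normal, hflag] at hlen
  have hn : q.1 = p.1 := by
    have := Multiplicative.ofAdd.injective hlen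
    omega
  exact Prod.ext hn hflag
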